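/- (Kreps–Yan) Let K ⊇ −L^1_+ be a closed convex cone in L^1(Ω, 𝓕, P) such that K ∩ L^1_+ = {0}. Then there exists a probability measure P̃ ∼ P with dP̃/dP ∈ L^∞ such that E_{P̃}[ξ] ≤ 0 for all ξ ∈ K. -/

import Mathlib

open MeasureTheory Filter Finset
open scoped ENNReal NNReal

noncomputable section

namespace BidAskFTAP

variable {Ω : Type*}

/-- Componentwise positive part of a vector in `ℝ^d`. -/
def posPart {d : ℕ} (x : Fin d → ℝ) : Fin d → ℝ := fun i => max (x i) 0

/-- Componentwise negative part of a vector in `ℝ^d`. -/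
def negPart {d : ℕ} (x : Fin d → ℝ) : Fin d → ℝ := fun i => max (-(x i)) 0

/-- Inner product on `ℝ^d`. -/
def dotp {d : ℕ} (x y : Fin d → ℝ) : ℝ := ∑ i, x i * y i

section Market

variable [m : MeasurableSpace Ω] {d : ℕ}

/-- `F` is a filtration on `(Ω, m)` with horizon `T`: monotone, sub-σ-algebras of `m`,
and `F T = m` (i.e. `𝓕_T = 𝓕`). -/
def IsFiltration (F : ℕ → MeasurableSpace Ω) (T : ℕ) : Prop :=
  Monotone F ∧ (∀ t, F t ≤ m) ∧ F T = m

/-- Adaptedness of an `ℝ^d`-valued process up to time `T`. -/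
def AdaptedProc (F : ℕ → MeasurableSpace Ω) (T : ℕ) (S : ℕ → Ω → Fin d → ℝ) : Prop :=
  ∀ t ≤ T, Measurable[F t] (S t)

/-- Standing assumptions on the bid and ask price processes `S̲ = Sb`, `S̄ = Sa`:
adapted, strictly positive components, and `S̲ ≤ S̄` a.s. -/
def IsBidAsk (P : Measure Ω) (F : ℕ → MeasurableSpace Ω) (T : ℕ)
    (Sb Sa : ℕ → Ω → Fin d → ℝ) : Prop :=
  AdaptedProc F T Sb ∧ AdaptedProc F T Sa ∧
  (∀ t ≤ T, ∀ i, ∀ᵐ ω ∂P, 0 < Sb t ω i) ∧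
  (∀ t ≤ T, ∀ i, ∀ᵐ ω ∂P, 0 < Sa t ω i) ∧
  (∀ t ≤ T, ∀ i, ∀ᵐ ω ∂P, Sb t ω i ≤ Sa t ω i)

/-- A trading strategy on horizon `T`: predictable (`H t` is `𝓕_{t-1}`-measurable),
with the convention `H 0 = 0` (so that `ΔH 1 = H 1`). -/
def IsStrategy (F : ℕ → MeasurableSpace Ω) (T : ℕ) (H : ℕ → Ω → Fin d → ℝ) : Prop :=
  H 0 = 0 ∧ ∀ t, 1 ≤ t → t ≤ T → Measurable[F (t - 1)] (H t)

/-- Membership in `𝒫_T^+`: componentwise nonnegative. -/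
def NonnegStrategy (T : ℕ) (H : ℕ → Ω → Fin d → ℝ) : Prop :=
  ∀ t ≤ T, ∀ ω, ∀ i, 0 ≤ H t ω i

/-- Membership in `𝒫_T^-`: componentwise nonpositive. -/
def NonposStrategy (T : ℕ) (H : ℕ → Ω → Fin d → ℝ) : Prop :=
  ∀ t ≤ T, ∀ ω, ∀ i, H t ω i ≤ 0

/-- Uniformly bounded strategy. -/
def BoundedStrategy (T : ℕ) (H : ℕ → Ω → Fin d → ℝ) : Prop :=
  ∃ C : ℝ, ∀ t ≤ T, ∀ ω, ∀ i, |H t ω i| ≤ C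

/-- The immediate–liquidation value process
`x_T(H) = -∑_{j=1}^T (ΔH_j)⁺·S̄_{j-1} + ∑_{j=1}^T (ΔH_j)⁻·S̲_{j-1} + (H_T)⁺·S̲_T - (H_T)⁻·S̄_T`. -/
def xval (Sb Sa : ℕ → Ω → Fin d → ℝ) (T : ℕ) (H : ℕ → Ω → Fin d → ℝ) (ω : Ω) : ℝ :=
  (∑ j ∈ Icc 1 T, (dotp (negPart (H j ω - H (j - 1) ω)) (Sb (j - 1) ω)
    - dotp (posPart (H j ω - H (j - 1) ω)) (Sa (j - 1) ω)))
  + dotp (posPart (H T ω)) (Sb T ω) - dotp (negPart (H T ω)) (Sa T ω)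

/-- The gain `(H · S)_T = ∑_{j=1}^T H_j · (S_j - S_{j-1})`. -/
def gain (S : ℕ → Ω → Fin d → ℝ) (T : ℕ) (H : ℕ → Ω → Fin d → ℝ) (ω : Ω) : ℝ :=
  ∑ j ∈ Icc 1 T, dotp (H j ω) (S j ω - S (j - 1) ω)

/-- Membership (as elements of `L⁰`, i.e. up to a.s. equality) in
`𝒜_t = ℛ_t - L⁰₊(𝓕_t)`. -/
def memA (P : Measure Ω) (F : ℕ → MeasurableSpace Ω) (Sb Sa : ℕ → Ω → Fin d → ℝ)
    (t : ℕ) (f : Ω → ℝ) : Prop :=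
  ∃ H : ℕ → Ω → Fin d → ℝ, IsStrategy F t H ∧
    ∃ r : Ω → ℝ, Measurable[F t] r ∧ (∀ᵐ ω ∂P, 0 ≤ r ω) ∧
      f =ᵐ[P] fun ω => xval Sb Sa t H ω - r ω

/-- The no-arbitrage condition `𝒜_t ∩ L⁰₊(𝓕_t) = {0}` at horizon `t`. -/
def NA (P : Measure Ω) (F : ℕ → MeasurableSpace Ω) (Sb Sa : ℕ → Ω → Fin d → ℝ)
    (t : ℕ) : Prop :=
  ∀ f : Ω → ℝ, memA P F Sb Sa t f → (∀ᵐ ω ∂P, 0 ≤ f ω) → f =ᵐ[P] 0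

/-- Two measures are equivalent: mutually absolutely continuous. -/
def EquivMeasure (P Q : Measure Ω) : Prop := P ≪ Q ∧ Q ≪ P

/-- The Radon–Nikodym density `dQ/dP` belongs to `L^∞(P)`. -/
def BoundedDensity (P Q : Measure Ω) : Prop :=
  ∃ C : ℝ≥0, ∀ᵐ ω ∂P, Q.rnDeriv P ω ≤ (C : ℝ≥0∞)

/-- `Q` is an equivalent bid-ask martingale measure (EBAMM) for `(S̲, S̄)`:
`Q ∼ P`, all `S̄_t` are `Q`-integrable, and for all `1 ≤ t ≤ T` and coordinates `i`:
`S̲_{t-1}^i ≤ E_Q[S̄_t^i | 𝓕_{t-1}]` and `E_Q[S̲_t^i | 𝓕_{t-1}] ≤ S̄_{t-1}^i` a.s. -/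
def IsEBAMM (P : Measure Ω) (F : ℕ → MeasurableSpace Ω) (T : ℕ)
    (Sb Sa : ℕ → Ω → Fin d → ℝ) (Q : Measure Ω) : Prop :=
  IsProbabilityMeasure Q ∧ EquivMeasure P Q ∧
  (∀ t ≤ T, ∀ i, Integrable (fun ω => Sa t ω i) Q) ∧
  (∀ t, 1 ≤ t → t ≤ T → ∀ i,
    (∀ᵐ ω ∂P, Sb (t - 1) ω i ≤ (Q[fun ω => Sa t ω i | F (t - 1)]) ω) ∧
    (∀ᵐ ω ∂P, (Q[fun ω => Sb t ω i | F (t - 1)]) ω ≤ Sa (t - 1) ω i))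

/-- `(S̃, Q)` is a consistent price system: `Q ∼ P`, `S̃` adapted, evolving between bid and
ask prices, and a `Q`-martingale. -/
def IsCPS (P : Measure Ω) (F : ℕ → MeasurableSpace Ω) (T : ℕ)
    (Sb Sa St : ℕ → Ω → Fin d → ℝ) (Q : Measure Ω) : Prop :=
  IsProbabilityMeasure Q ∧ EquivMeasure P Q ∧ AdaptedProc F T St ∧
  (∀ t ≤ T, ∀ i, Integrable (fun ω => St t ω i) Q) ∧
  (∀ t ≤ T, ∀ i, ∀ᵐ ω ∂P, Sb t ω i ≤ St t ω i ∧ St t ω i ≤ Sa t ω i) ∧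
  (∀ t, 1 ≤ t → t ≤ T → ∀ i,
    Q[fun ω => St t ω i | F (t - 1)] =ᵐ[P] fun ω => St (t - 1) ω i)

/-- `(S̃, Q)` is a supermartingale consistent price system. -/
def IsSupCPS (P : Measure Ω) (F : ℕ → MeasurableSpace Ω) (T : ℕ)
    (Sb Sa St : ℕ → Ω → Fin d → ℝ) (Q : Measure Ω) : Prop :=
  IsProbabilityMeasure Q ∧ EquivMeasure P Q ∧ AdaptedProc F T St ∧
  (∀ t ≤ T, ∀ i, Integrable (fun ω => St t ω i) Q) ∧
  (∀ t ≤ T, ∀ i, ∀ᵐ ω ∂P, Sb t ω i ≤ St t ω i ∧ St t ω i ≤ Sa t ω i) ∧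
  (∀ t, 1 ≤ t → t ≤ T → ∀ i,
    (∀ᵐ ω ∂P, (Q[fun ω => St t ω i | F (t - 1)]) ω ≤ St (t - 1) ω i))

/-- `(S̃, Q)` is a submartingale consistent price system. -/
def IsSubCPS (P : Measure Ω) (F : ℕ → MeasurableSpace Ω) (T : ℕ)
    (Sb Sa St : ℕ → Ω → Fin d → ℝ) (Q : Measure Ω) : Prop :=
  IsProbabilityMeasure Q ∧ EquivMeasure P Q ∧ AdaptedProc F T St ∧
  (∀ t ≤ T, ∀ i, Integrable (fun ω => St t ω i) Q) ∧
  (∀ t ≤ T, ∀ i, ∀ᵐ ω ∂P, Sb t ω i ≤ St t ω i ∧ St t ω i ≤ Sa t ω i) ∧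
  (∀ t, 1 ≤ t → t ≤ T → ∀ i,
    (∀ᵐ ω ∂P, St (t - 1) ω i ≤ (Q[fun ω => St t ω i | F (t - 1)]) ω))

/-- Membership (up to a.s. equality) in
`F_{t-1,t+k} = ℛ_{t-1,t+k}⁺ + ℛ_{t-1,t+k}⁻ - L⁰₊(𝓕_{t+k})`:
`f = Hp·(S̲_{t+k} - S̄_{t-1}) - Hm·(S̄_{t+k} - S̲_{t-1}) - r` with `Hp, Hm ≥ 0`
`𝓕_{t-1}`-measurable and `r ∈ L⁰₊(𝓕_{t+k})`. -/
def memFtk (P : Measure Ω) (F : ℕ → MeasurableSpace Ω) (Sb Sa : ℕ → Ω → Fin d → ℝ)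
    (t k : ℕ) (f : Ω → ℝ) : Prop :=
  ∃ (Hp Hm : Ω → Fin d → ℝ) (r : Ω → ℝ),
    Measurable[F (t - 1)] Hp ∧ Measurable[F (t - 1)] Hm ∧
    (∀ ω i, 0 ≤ Hp ω i) ∧ (∀ ω i, 0 ≤ Hm ω i) ∧
    Measurable[F (t + k)] r ∧ (∀ᵐ ω ∂P, 0 ≤ r ω) ∧
    f =ᵐ[P] fun ω =>
      dotp (Hp ω) (Sb (t + k) ω - Sa (t - 1) ω)
        - dotp (Hm ω) (Sa (t + k) ω - Sb (t - 1) ω) - r ω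

/-- Membership (up to a.s. equality) in
`F_t = ∑_{j<t} ℛ_{j,t}⁺ + ∑_{j<t} ℛ_{j,t}⁻ - L⁰₊(𝓕_t)`. -/
def memFt (P : Measure Ω) (F : ℕ → MeasurableSpace Ω) (Sb Sa : ℕ → Ω → Fin d → ℝ)
    (t : ℕ) (f : Ω → ℝ) : Prop :=
  ∃ (Hp Hm : ℕ → Ω → Fin d → ℝ) (r : Ω → ℝ),
    (∀ j < t, Measurable[F j] (Hp j) ∧ Measurable[F j] (Hm j)) ∧
    (∀ j < t, ∀ ω i, 0 ≤ Hp j ω i ∧ 0 ≤ Hm j ω i) ∧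
    Measurable[F t] r ∧ (∀ᵐ ω ∂P, 0 ≤ r ω) ∧
    f =ᵐ[P] fun ω =>
      (∑ j ∈ range t,
        (dotp (Hp j ω) (Sb t ω - Sa j ω) - dotp (Hm j ω) (Sa t ω - Sb j ω))) - r ω

/-- `x_{s,u}(H) = -H⁺·S̄_s + H⁻·S̲_s + H⁺·S̲_u - H⁻·S̄_u` for an `𝓕_s`-measurable `H`. -/
def xval2 (Sb Sa : ℕ → Ω → Fin d → ℝ) (s u : ℕ) (H : Ω → Fin d → ℝ) (ω : Ω) : ℝ :=
  - dotp (posPart (H ω)) (Sa s ω) + dotp (negPart (H ω)) (Sb s ω)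
    + dotp (posPart (H ω)) (Sb u ω) - dotp (negPart (H ω)) (Sa u ω)

/-- Membership (up to a.s. equality) in `𝒜_{t-1,t+k} = ℛ_{t-1,t+k} - L⁰₊(𝓕_{t+k})` where
`ℛ_{t-1,t+k} = {x_{t-1,t+k}(H) : H ∈ L⁰(ℝ^d, 𝓕_{t-1})}`. -/
def memA2 (P : Measure Ω) (F : ℕ → MeasurableSpace Ω) (Sb Sa : ℕ → Ω → Fin d → ℝ)
    (t k : ℕ) (f : Ω → ℝ) : Prop :=
  ∃ (H : Ω → Fin d → ℝ) (r : Ω → ℝ),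
    Measurable[F (t - 1)] H ∧ Measurable[F (t + k)] r ∧ (∀ᵐ ω ∂P, 0 ≤ r ω) ∧
    f =ᵐ[P] fun ω => xval2 Sb Sa (t - 1) (t + k) H ω - r ω

end Market

end BidAskFTAP

section KrepsYanAux

open MeasureTheory Filter
open scoped ENNReal NNReal

variable {Ω : Type*} [MeasurableSpace Ω] (P : Measure Ω) [IsProbabilityMeasure P]

lemma krepsYan_rep (f : Lp ℝ 1 P →L[ℝ] ℝ)
    (hf : ∀ ξ : Lp ℝ 1 P, (∀ᵐ ω ∂P, 0 ≤ (ξ : Ω → ℝ) ω) → 0 ≤ f ξ) :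
    ∃ g : Ω → ℝ, Measurable g ∧ (∀ ω, 0 ≤ g ω ∧ g ω ≤ ‖f‖) ∧
      ∀ ξ : Lp ℝ 1 P, f ξ = ∫ ω, g ω * (ξ : Ω → ℝ) ω ∂P := by
  have hle : (1:ℝ≥0∞) ≤ 2 := by norm_num
  -- inclusion L² → L¹
  set inc : Lp ℝ 2 P → Lp ℝ 1 P :=
    fun ξ => ((Lp.memLp ξ).mono_exponent hle).toLp ξ with hinc_def
  have hinc_coe : ∀ ξ : Lp ℝ 2 P, (inc ξ : Ω → ℝ) =ᵐ[P] ξ := fun ξ => MemLp.coeFn_toLp _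
  have hinc_norm : ∀ ξ : Lp ℝ 2 P, ‖inc ξ‖ ≤ ‖ξ‖ := by
    intro ξ
    rw [Lp.norm_def, Lp.norm_def]
    refine ENNReal.toReal_le_toReal (Lp.eLpNorm_ne_top _) (Lp.eLpNorm_ne_top _) |>.mpr ?_
    calc eLpNorm (inc ξ) 1 P = eLpNorm ξ 1 P := eLpNorm_congr_ae (hinc_coe ξ)
      _ ≤ eLpNorm ξ 2 P := eLpNorm_le_eLpNorm_of_exponent_le hle (Lp.aestronglyMeasurable ξ)
  have hinc_add : ∀ ξ η : Lp ℝ 2 P, inc (ξ + η) = inc ξ + inc η := by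
    intro ξ η
    refine Lp.ext ?_
    filter_upwards [hinc_coe (ξ + η), hinc_coe ξ, hinc_coe η, Lp.coeFn_add ξ η,
      Lp.coeFn_add (inc ξ) (inc η)] with ω h1 h2 h3 h4 h5
    rw [h1, h4, h5, Pi.add_apply, Pi.add_apply, h2, h3]
  have hinc_smul : ∀ (c : ℝ) (ξ : Lp ℝ 2 P), inc (c • ξ) = c • inc ξ := by
    intro c ξ
    refine Lp.ext ?_
    filter_upwards [hinc_coe (c • ξ), hinc_coe ξ, Lp.coeFn_smul c ξ,
      Lp.coeFn_smul c (inc ξ)] with ω h1 h2 h3 h4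
    rw [h1, h3, h4, Pi.smul_apply, Pi.smul_apply, h2]
  -- restricted functional on L²
  set T : Lp ℝ 2 P →L[ℝ] ℝ := LinearMap.mkContinuous
    { toFun := fun ξ => f (inc ξ)
      map_add' := fun ξ η => by
        change f (inc (ξ + η)) = f (inc ξ) + f (inc η)
        rw [hinc_add]; exact map_add f _ _
      map_smul' := fun c ξ => by
        simp only [RingHom.id_apply, smul_eq_mul]
        change f (inc (c • ξ)) = c * f (inc ξ)
        rw [hinc_smul]; simp } ‖f‖
    (fun ξ => by
      calc ‖f (inc ξ)‖ ≤ ‖f‖ * ‖inc ξ‖ := f.le_opNorm _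
        _ ≤ ‖f‖ * ‖ξ‖ := by gcongr; exact hinc_norm ξ) with hT_def
  have hT_apply : ∀ ξ : Lp ℝ 2 P, T ξ = f (inc ξ) := fun _ => rfl
  -- Riesz representation in L²
  set g₂ : Lp ℝ 2 P := (InnerProductSpace.toDual ℝ (Lp ℝ 2 P)).symm T with hg2_def
  have hg2 : ∀ ξ : Lp ℝ 2 P, ∫ ω, (g₂ : Ω → ℝ) ω * (ξ : Ω → ℝ) ω ∂P = f (inc ξ) := by
    intro ξ
    have := InnerProductSpace.toDual_symm_apply (𝕜 := ℝ) (E := Lp ℝ 2 P) (x := ξ) (y := T)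
    rw [← hT_apply, ← this, ← hg2_def, L2.inner_def]
    exact integral_congr_ae (Filter.Eventually.of_forall fun ω => by simp [mul_comm])
  have hg2_int : Integrable (g₂ : Ω → ℝ) P :=
    memLp_one_iff_integrable.mp ((Lp.memLp g₂).mono_exponent hle)
  -- indicator elements
  have hind2_coe : ∀ {s : Set Ω} (hs : MeasurableSet s) (c : ℝ),
      ((indicatorConstLp 2 hs (measure_ne_top P s) c : Lp ℝ 2 P) : Ω → ℝ)
        =ᵐ[P] s.indicator fun _ => c := fun hs c => indicatorConstLp_coeFn
  have hinc_ind : ∀ {s : Set Ω} (hs : MeasurableSet s) (c : ℝ),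
      inc (indicatorConstLp 2 hs (measure_ne_top P s) c)
        = indicatorConstLp 1 hs (measure_ne_top P s) c := by
    intro s hs c
    refine Lp.ext ?_
    filter_upwards [hinc_coe (indicatorConstLp 2 hs (measure_ne_top P s) c),
      hind2_coe hs c, indicatorConstLp_coeFn (p := 1) (μ := P) (hs := hs)
        (hμs := measure_ne_top P s) (c := c)] with ω h1 h2 h3
    rw [h1, h2, h3]
  have hsetint : ∀ {s : Set Ω} (hs : MeasurableSet s),
      ∫ ω in s, (g₂ : Ω → ℝ) ω ∂P
        = f (inc (indicatorConstLp 2 hs (measure_ne_top P s) (1:ℝ))) := by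
    intro s hs
    rw [← hg2 (indicatorConstLp 2 hs (measure_ne_top P s) 1), ← integral_indicator hs]
    refine integral_congr_ae ?_
    filter_upwards [hind2_coe hs 1] with ω hω
    rw [hω]
    by_cases h : ω ∈ s <;> simp [h]
  -- nonnegativity a.e.
  have hnn : 0 ≤ᵐ[P] (g₂ : Ω → ℝ) := by
    refine ae_nonneg_of_forall_setIntegral_nonneg hg2_int fun s hs _ => ?_
    rw [hsetint hs]
    refine hf _ ?_
    filter_upwards [hinc_coe (indicatorConstLp 2 hs (measure_ne_top P s) 1),
      hind2_coe hs 1] with ω h1 h2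
    rw [h1, h2]
    by_cases h : ω ∈ s <;> simp [h]
  -- measurable representative
  obtain ⟨m, hm_meas, hm_ae⟩ : ∃ m : Ω → ℝ, Measurable m ∧ (g₂ : Ω → ℝ) =ᵐ[P] m := by
    have h := (Lp.aestronglyMeasurable g₂).aemeasurable
    exact ⟨h.mk _, h.measurable_mk, h.ae_eq_mk⟩
  have hm_int : Integrable m P := hg2_int.congr hm_ae
  -- upper bound a.e.
  have hub : ∀ᵐ ω ∂P, m ω ≤ ‖f‖ := by
    have hnull : ∀ n : ℕ, P {ω | ‖f‖ + 1/(n+1) ≤ m ω} = 0 := by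
      intro n
      set s : Set Ω := {ω | ‖f‖ + 1/(n+1) ≤ m ω} with hs_def
      have hs : MeasurableSet s := measurableSet_le measurable_const hm_meas
      have h1 : (‖f‖ + 1/(n+1)) * (P s).toReal ≤ ∫ ω in s, m ω ∂P :=
        setIntegral_ge_of_const_le_real hs (measure_ne_top P s) (fun x hx => hx)
          (hm_int.integrableOn)
      have h2 : ∫ ω in s, m ω ∂P = ∫ ω in s, (g₂ : Ω → ℝ) ω ∂P :=
        setIntegral_congr_ae hs (hm_ae.mono fun ω h _ => h.symm)
      have h3 : ∫ ω in s, (g₂ : Ω → ℝ) ω ∂P ≤ ‖f‖ * (P s).toReal := by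
        rw [hsetint hs, hinc_ind hs 1]
        calc f (indicatorConstLp 1 hs (measure_ne_top P s) 1)
            ≤ ‖f (indicatorConstLp 1 hs (measure_ne_top P s) 1)‖ := le_abs_self _
          _ ≤ ‖f‖ * ‖indicatorConstLp 1 hs (measure_ne_top P s) (1:ℝ)‖ := f.le_opNorm _
          _ = ‖f‖ * (P s).toReal := by
              rw [norm_indicatorConstLp one_ne_zero ENNReal.one_ne_top]
              simp [Measure.real]
      have h4 : (‖f‖ + 1/(n+1)) * (P s).toReal ≤ ‖f‖ * (P s).toReal :=
        h1.trans (h2.le.trans h3)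
      by_contra hne
      have hpos : 0 < (P s).toReal :=
        ENNReal.toReal_pos hne (measure_ne_top P s)
      have : ‖f‖ + 1/(n+1) ≤ ‖f‖ := le_of_mul_le_mul_right h4 hpos
      have hn : (0:ℝ) < 1/(n+1) := by positivity
      linarith
    have : P {ω | ‖f‖ < m ω} = 0 := by
      refine measure_mono_null (fun ω hω => ?_) (measure_iUnion_null_iff.mpr hnull)
      obtain ⟨n, hn⟩ := exists_nat_one_div_lt (sub_pos.mpr (show ‖f‖ < m ω from hω))
      exact Set.mem_iUnion.mpr ⟨n, by simp only [Set.mem_setOf_eq]; push_cast; linarith⟩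
    rw [ae_iff]
    simpa only [not_le] using this
  -- clamped measurable density
  set g : Ω → ℝ := fun ω => min (max (m ω) 0) ‖f‖ with hg_def
  have hg_meas : Measurable g := (hm_meas.max measurable_const).min measurable_const
  have hg_bounds : ∀ ω, 0 ≤ g ω ∧ g ω ≤ ‖f‖ := fun ω =>
    ⟨le_min (le_max_right _ _) (norm_nonneg f), min_le_right _ _⟩
  have hg_ae : (g₂ : Ω → ℝ) =ᵐ[P] g := by
    filter_upwards [hm_ae, hnn, hub] with ω h1 h2 h3
    have h2' : (0:ℝ) ≤ m ω := h1 ▸ h2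
    show (g₂ : Ω → ℝ) ω = (m ω ⊔ 0) ⊓ ‖f‖
    rw [max_eq_left h2', min_eq_left h3]
    exact h1
  have hgint : ∀ ξ : Lp ℝ 1 P, Integrable (fun ω => g ω * (ξ : Ω → ℝ) ω) P := by
    intro ξ
    exact (L1.integrable_coeFn ξ).bdd_mul hg_meas.aestronglyMeasurable
      (Filter.Eventually.of_forall fun ω => by
        rw [Real.norm_eq_abs, abs_of_nonneg (hg_bounds ω).1]; exact (hg_bounds ω).2)
  have hg_rep2 : ∀ ξ : Lp ℝ 2 P, ∫ ω, g ω * (ξ : Ω → ℝ) ω ∂P = f (inc ξ) := by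
    intro ξ
    rw [← hg2 ξ]
    exact integral_congr_ae (hg_ae.mono fun ω h => by dsimp only; rw [h])
  -- the continuous functional ξ ↦ ∫ g ξ on L¹
  have int_add : ∀ ξ η : Lp ℝ 1 P,
      ∫ ω, g ω * ((ξ + η : Lp ℝ 1 P) : Ω → ℝ) ω ∂P
        = (∫ ω, g ω * (ξ : Ω → ℝ) ω ∂P) + ∫ ω, g ω * (η : Ω → ℝ) ω ∂P := by
    intro ξ η
    rw [← integral_add (hgint ξ) (hgint η)]
    refine integral_congr_ae ?_
    filter_upwards [Lp.coeFn_add ξ η] with ω h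
    rw [h, Pi.add_apply, mul_add]
  set Φ : Lp ℝ 1 P →L[ℝ] ℝ := LinearMap.mkContinuous
    { toFun := fun ξ => ∫ ω, g ω * (ξ : Ω → ℝ) ω ∂P
      map_add' := int_add
      map_smul' := fun c ξ => by
        simp only [RingHom.id_apply, smul_eq_mul]
        rw [← integral_const_mul]
        refine integral_congr_ae ?_
        filter_upwards [Lp.coeFn_smul c ξ] with ω h
        rw [h, Pi.smul_apply, smul_eq_mul]; ring } ‖f‖
    (fun ξ => by
      simp only [LinearMap.coe_mk, AddHom.coe_mk]
      calc ‖∫ ω, g ω * (ξ : Ω → ℝ) ω ∂P‖ ≤ ∫ ω, ‖g ω * (ξ : Ω → ℝ) ω‖ ∂P :=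
            norm_integral_le_integral_norm _
        _ ≤ ∫ ω, ‖f‖ * ‖(ξ : Ω → ℝ) ω‖ ∂P := by
            refine integral_mono (hgint ξ).norm ((L1.integrable_coeFn ξ).norm.const_mul _) ?_
            intro ω
            dsimp only
            rw [norm_mul]
            exact mul_le_mul_of_nonneg_right
              (by rw [Real.norm_eq_abs, abs_of_nonneg (hg_bounds ω).1]; exact (hg_bounds ω).2)
              (norm_nonneg _)
        _ = ‖f‖ * ‖ξ‖ := by rw [integral_const_mul, ← L1.norm_eq_integral_norm]) with hΦ_def
  have hΦ_apply : ∀ ξ : Lp ℝ 1 P, Φ ξ = ∫ ω, g ω * (ξ : Ω → ℝ) ω ∂P := fun _ => rfl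
  -- conclude by density (Lp.induction)
  refine ⟨g, hg_meas, hg_bounds, fun ξ => ?_⟩
  rw [← hΦ_apply]
  revert ξ
  have key : ∀ ξ : Lp ℝ 1 P, f ξ = Φ ξ := by
    refine fun ξ => Lp.induction (E := ℝ) (p := (1:ℝ≥0∞)) ENNReal.one_ne_top
      (fun ξ => f ξ = Φ ξ) ?ind ?add ?closed ξ
    case ind =>
      intro c s hs hμs
      rw [Lp.simpleFunc.coe_indicatorConst, hΦ_apply]
      have h1 : indicatorConstLp 1 hs hμs.ne c
          = inc (indicatorConstLp 2 hs (measure_ne_top P s) c) := by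
        rw [hinc_ind hs c]
      rw [h1, ← hg_rep2]
      exact integral_congr_ae (((hinc_coe _).symm).mono fun ω h => by dsimp only; rw [← h])
    case add =>
      intro F G hF hG hdisj hPF hPG
      rw [map_add, map_add, hPF, hPG]
    case closed => exact isClosed_eq f.continuous Φ.continuous
  exact key

lemma krepsYan_exists_g (K : Set (Lp ℝ 1 P))
    (hclosed : IsClosed K) (hconvex : Convex ℝ K)
    (hcone : ∀ ξ ∈ K, ∀ c : ℝ, 0 ≤ c → c • ξ ∈ K)
    (hneg : ∀ ξ : Lp ℝ 1 P, (∀ᵐ ω ∂P, (ξ : Ω → ℝ) ω ≤ 0) → ξ ∈ K)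
    (hpos : ∀ ξ ∈ K, (∀ᵐ ω ∂P, 0 ≤ (ξ : Ω → ℝ) ω) → ξ = 0)
    (A : Set Ω) (hA : MeasurableSet A) (hPA : P A ≠ 0) :
    ∃ g : Ω → ℝ, Measurable g ∧ (∀ ω, 0 ≤ g ω ∧ g ω ≤ 1) ∧
      (∀ ξ ∈ K, ∫ ω, g ω * (ξ : Ω → ℝ) ω ∂P ≤ 0) ∧ 0 < ∫ ω in A, g ω ∂P := by
  set x : Lp ℝ 1 P := indicatorConstLp 1 hA (measure_ne_top P A) 1 with hx_def
  have hx_coe : (x : Ω → ℝ) =ᵐ[P] A.indicator fun _ => (1:ℝ) := indicatorConstLp_coeFn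
  have hxK : x ∉ K := by
    intro hxK
    have hx0 : x = 0 := by
      refine hpos x hxK ?_
      filter_upwards [hx_coe] with ω h
      rw [h]
      by_cases hω : ω ∈ A <;> simp [hω]
    have hzero : (x : Ω → ℝ) =ᵐ[P] 0 := hx0 ▸ Lp.coeFn_zero ℝ 1 P
    have : A.indicator (fun _ => (1:ℝ)) =ᵐ[P] 0 := hx_coe.symm.trans hzero
    refine hPA ?_
    refine measure_mono_null (fun ω hω => ?_) (ae_iff.mp this)
    simp only [Set.mem_setOf_eq, Set.indicator_of_mem hω, Pi.zero_apply]
    norm_num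
  obtain ⟨f, u, hKu, hux⟩ := geometric_hahn_banach_closed_point hconvex hclosed hxK
  have h0K : (0 : Lp ℝ 1 P) ∈ K := by
    refine hneg 0 ?_
    filter_upwards [Lp.coeFn_zero ℝ 1 P] with ω h
    simp [h]
  have hu0 : 0 < u := by simpa using hKu 0 h0K
  have hfK : ∀ ξ ∈ K, f ξ ≤ 0 := by
    intro ξ hξ
    by_contra h
    push_neg at h
    have hc : (0:ℝ) ≤ u / f ξ := le_of_lt (div_pos hu0 h)
    have := hKu _ (hcone ξ hξ _ hc)
    rw [_root_.map_smul, smul_eq_mul, div_mul_cancel₀ _ (ne_of_gt h)] at this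
    exact lt_irrefl u this
  have hf_nonneg : ∀ ξ : Lp ℝ 1 P, (∀ᵐ ω ∂P, 0 ≤ (ξ : Ω → ℝ) ω) → 0 ≤ f ξ := by
    intro ξ hξ
    have hnegξ : (-ξ) ∈ K := by
      refine hneg (-ξ) ?_
      filter_upwards [Lp.coeFn_neg ξ, hξ] with ω h1 h2
      rw [h1]; simpa using h2
    have := hfK _ hnegξ
    rw [map_neg] at this
    linarith
  obtain ⟨g, hg_meas, hg_bounds, hg_rep⟩ := krepsYan_rep P f hf_nonneg
  have hfx : 0 < f x := lt_trans hu0 hux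
  have hfnorm : 0 < ‖f‖ := by
    rcases (norm_nonneg f).eq_or_lt with h | h
    · exfalso
      have hf0 : f = 0 := norm_eq_zero.mp h.symm
      rw [hf0] at hfx; simpa using hfx
    · exact h
  have hintA : ∫ ω in A, g ω ∂P = f x := by
    rw [hg_rep x, ← integral_indicator hA]
    refine integral_congr_ae ?_
    filter_upwards [hx_coe] with ω h
    rw [h]
    by_cases hω : ω ∈ A <;> simp [hω]
  refine ⟨fun ω => g ω / ‖f‖, hg_meas.div_const _, fun ω =>
    ⟨div_nonneg (hg_bounds ω).1 hfnorm.le, div_le_one_of_le₀ (hg_bounds ω).2 hfnorm.le⟩,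
    ?_, ?_⟩
  · intro ξ hξ
    have : ∫ ω, g ω / ‖f‖ * (ξ : Ω → ℝ) ω ∂P = ‖f‖⁻¹ * ∫ ω, g ω * (ξ : Ω → ℝ) ω ∂P := by
      rw [← integral_const_mul]
      exact integral_congr_ae (Filter.Eventually.of_forall fun ω => by ring)
    rw [this, ← hg_rep ξ]
    exact mul_nonpos_of_nonneg_of_nonpos (inv_nonneg.mpr hfnorm.le) (hfK ξ hξ)
  · have : ∫ ω in A, g ω / ‖f‖ ∂P = ‖f‖⁻¹ * ∫ ω in A, g ω ∂P := by
      rw [← integral_const_mul]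
      exact integral_congr_ae (Filter.Eventually.of_forall fun ω => by ring)
    rw [this, hintA]
    exact mul_pos (inv_pos.mpr hfnorm) hfx

open MeasureTheory in
theorem stmt16' {Ω : Type*} [MeasurableSpace Ω]
    (P : Measure Ω) [IsProbabilityMeasure P]
    (K : Set (Lp ℝ 1 P))
    (hclosed : IsClosed K) (hconvex : Convex ℝ K)
    (hcone : ∀ ξ ∈ K, ∀ c : ℝ, 0 ≤ c → c • ξ ∈ K)
    (hneg : ∀ ξ : Lp ℝ 1 P, (∀ᵐ ω ∂P, (ξ : Ω → ℝ) ω ≤ 0) → ξ ∈ K)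
    (hpos : ∀ ξ ∈ K, (∀ᵐ ω ∂P, 0 ≤ (ξ : Ω → ℝ) ω) → ξ = 0) :
    ∃ Ptil : Measure Ω, IsProbabilityMeasure Ptil ∧ (P ≪ Ptil ∧ Ptil ≪ P) ∧
      (∃ C : NNReal, ∀ᵐ ω ∂P, Ptil.rnDeriv P ω ≤ (C : ENNReal)) ∧
      ∀ ξ ∈ K, ∫ ω, (ξ : Ω → ℝ) ω ∂Ptil ≤ 0 := by
  classical
  set G : Set (Ω → ℝ) := {g | Measurable g ∧ (∀ ω, 0 ≤ g ω ∧ g ω ≤ 1) ∧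
    ∀ ξ ∈ K, ∫ ω, g ω * (ξ : Ω → ℝ) ω ∂P ≤ 0} with hG_def
  have hG_zero : (fun _ : Ω => (0:ℝ)) ∈ G :=
    ⟨measurable_const, fun ω => ⟨le_rfl, zero_le_one⟩, fun ξ _ => by simp⟩
  set S : Set ℝ := (fun g : Ω → ℝ => (P {ω | 0 < g ω}).toReal) '' G with hS_def
  have hS_ne : S.Nonempty := ⟨_, ⟨_, hG_zero, rfl⟩⟩
  have hS_bdd : BddAbove S := by
    refine ⟨1, fun r hr => ?_⟩
    obtain ⟨g, _, rfl⟩ := hr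
    calc (P {ω | 0 < g ω}).toReal
        ≤ (P Set.univ).toReal :=
          ENNReal.toReal_mono (measure_ne_top _ _)
            (measure_mono (Set.subset_univ _))
      _ = 1 := by simp
  obtain ⟨u, hu_mono, hu_tendsto, hu_mem⟩ := exists_seq_tendsto_sSup hS_ne hS_bdd
  choose gn hgn hgn_eq using hu_mem
  have hsum0 : Summable (fun n : ℕ => ((1:ℝ)/2)^(n+1)) := by
    simp_rw [pow_succ]
    exact (summable_geometric_of_lt_one (by norm_num) (by norm_num)).mul_right _
  have hsum : ∀ ω, Summable (fun n => ((1:ℝ)/2)^(n+1) * gn n ω) := by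
    intro ω
    refine Summable.of_nonneg_of_le
      (fun n => mul_nonneg (by positivity) ((hgn n).2.1 ω).1) (fun n => ?_) hsum0
    exact mul_le_of_le_one_right (by positivity) ((hgn n).2.1 ω).2
  set gstar : Ω → ℝ := fun ω => ∑' n, ((1:ℝ)/2)^(n+1) * gn n ω with hgstar_def
  have hgstar_meas : Measurable gstar := by
    apply measurable_of_tendsto_metrizable
      (f := fun N ω => ∑ n ∈ Finset.range N, ((1:ℝ)/2)^(n+1) * gn n ω)
      (fun N => Finset.measurable_sum _ fun n _ => ((hgn n).1.const_mul _))
    rw [tendsto_pi_nhds]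
    exact fun ω => (hsum ω).hasSum.tendsto_sum_nat
  have hgstar_nonneg : ∀ ω, 0 ≤ gstar ω := fun ω =>
    tsum_nonneg fun n => mul_nonneg (by positivity) ((hgn n).2.1 ω).1
  have htsum_half : ∑' n : ℕ, ((1:ℝ)/2)^(n+1) = 1 := by
    simp_rw [pow_succ]
    rw [tsum_mul_right, tsum_geometric_of_lt_one (by norm_num) (by norm_num)]
    norm_num
  have hgstar_le_one : ∀ ω, gstar ω ≤ 1 := by
    intro ω
    calc gstar ω ≤ ∑' n : ℕ, ((1:ℝ)/2)^(n+1) :=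
          Summable.tsum_le_tsum (fun n => mul_le_of_le_one_right (by positivity)
            ((hgn n).2.1 ω).2) (hsum ω) hsum0
      _ = 1 := htsum_half
  have hint_bdd : ∀ (g : Ω → ℝ), Measurable g → (∀ ω, 0 ≤ g ω ∧ g ω ≤ 1) →
      ∀ ξ : Lp ℝ 1 P, Integrable (fun ω => g ω * (ξ : Ω → ℝ) ω) P := by
    intro g hm hb ξ
    exact (L1.integrable_coeFn ξ).bdd_mul hm.aestronglyMeasurable
      (Filter.Eventually.of_forall fun ω => by rw [Real.norm_eq_abs, abs_of_nonneg (hb ω).1]; exact (hb ω).2)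
  have hgstarK : ∀ ξ ∈ K, ∫ ω, gstar ω * (ξ : Ω → ℝ) ω ∂P ≤ 0 := by
    intro ξ hξ
    have hmeas_term : ∀ n : ℕ, AEStronglyMeasurable
        (fun ω => ((1:ℝ)/2)^(n+1) * gn n ω * (ξ : Ω → ℝ) ω) P := fun n =>
      (((hgn n).1.const_mul _).aestronglyMeasurable.mul (Lp.aestronglyMeasurable ξ))
    have hfin : ∑' n : ℕ, ∫⁻ ω, ‖((1:ℝ)/2)^(n+1) * gn n ω * (ξ : Ω → ℝ) ω‖ₑ ∂P ≠ ∞ := by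
      have hbound : ∀ n : ℕ, ∫⁻ ω, ‖((1:ℝ)/2)^(n+1) * gn n ω * (ξ : Ω → ℝ) ω‖ₑ ∂P
          ≤ ENNReal.ofReal (((1:ℝ)/2)^(n+1)) * ∫⁻ ω, ‖(ξ : Ω → ℝ) ω‖ₑ ∂P := by
        intro n
        rw [← lintegral_const_mul' _ _ ENNReal.ofReal_ne_top]
        refine lintegral_mono fun ω => ?_
        rw [Real.enorm_eq_ofReal_abs, Real.enorm_eq_ofReal_abs,
          ← ENNReal.ofReal_mul (by positivity)]
        refine ENNReal.ofReal_le_ofReal ?_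
        rw [abs_mul, abs_mul]
        have h1 : |((1:ℝ)/2)^(n+1)| = ((1:ℝ)/2)^(n+1) := abs_of_nonneg (by positivity)
        have h2 : |gn n ω| ≤ 1 := by
          rw [abs_of_nonneg ((hgn n).2.1 ω).1]; exact ((hgn n).2.1 ω).2
        calc |((1:ℝ)/2)^(n+1)| * |gn n ω| * |(ξ : Ω → ℝ) ω|
            ≤ |((1:ℝ)/2)^(n+1)| * 1 * |(ξ : Ω → ℝ) ω| :=
              mul_le_mul_of_nonneg_right
                (mul_le_mul_of_nonneg_left h2 (abs_nonneg _)) (abs_nonneg _)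
          _ = ((1:ℝ)/2)^(n+1) * |(ξ : Ω → ℝ) ω| := by rw [h1, mul_one]
      have hB : ∫⁻ ω, ‖(ξ : Ω → ℝ) ω‖ₑ ∂P < ∞ := (L1.integrable_coeFn ξ).2
      refine ne_of_lt (lt_of_le_of_lt (ENNReal.tsum_le_tsum hbound) ?_)
      rw [ENNReal.tsum_mul_right, ← ENNReal.ofReal_tsum_of_nonneg
        (fun n => by positivity) hsum0, htsum_half]
      exact ENNReal.mul_lt_top ENNReal.ofReal_lt_top hB
    have heq : ∫ ω, gstar ω * (ξ : Ω → ℝ) ω ∂P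
        = ∑' n : ℕ, ∫ ω, ((1:ℝ)/2)^(n+1) * gn n ω * (ξ : Ω → ℝ) ω ∂P := by
      rw [← integral_tsum hmeas_term hfin]
      refine integral_congr_ae (Filter.Eventually.of_forall fun ω => ?_)
      dsimp only
      rw [hgstar_def]
      exact (tsum_mul_right).symm
    have hterm : ∀ n : ℕ, ∫ ω, ((1:ℝ)/2)^(n+1) * gn n ω * (ξ : Ω → ℝ) ω ∂P ≤ 0 := by
      intro n
      have h : ∫ ω, ((1:ℝ)/2)^(n+1) * gn n ω * (ξ : Ω → ℝ) ω ∂P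
          = ((1:ℝ)/2)^(n+1) * ∫ ω, gn n ω * (ξ : Ω → ℝ) ω ∂P := by
        rw [← integral_const_mul]
        exact integral_congr_ae (Filter.Eventually.of_forall fun ω => by ring)
      rw [h]
      exact mul_nonpos_of_nonneg_of_nonpos (by positivity) ((hgn n).2.2 ξ hξ)
    have hsummable : Summable (fun n : ℕ =>
        ∫ ω, ((1:ℝ)/2)^(n+1) * gn n ω * (ξ : Ω → ℝ) ω ∂P) := by
      refine Summable.of_abs (Summable.of_nonneg_of_le (fun n => abs_nonneg _)
        (fun n => ?_) (hsum0.mul_right (∫ ω, |(ξ : Ω → ℝ) ω| ∂P)))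
      have h : ∫ ω, ((1:ℝ)/2)^(n+1) * gn n ω * (ξ : Ω → ℝ) ω ∂P
          = ((1:ℝ)/2)^(n+1) * ∫ ω, gn n ω * (ξ : Ω → ℝ) ω ∂P := by
        rw [← integral_const_mul]
        exact integral_congr_ae (Filter.Eventually.of_forall fun ω => by ring)
      rw [h, abs_mul, abs_of_nonneg (show (0:ℝ) ≤ ((1:ℝ)/2)^(n+1) by positivity)]
      refine mul_le_mul_of_nonneg_left ?_ (by positivity)
      calc |∫ ω, gn n ω * (ξ : Ω → ℝ) ω ∂P| ≤ ∫ ω, |gn n ω * (ξ : Ω → ℝ) ω| ∂P :=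
            by simpa only [Real.norm_eq_abs] using
              norm_integral_le_integral_norm (μ := P) (fun ω => gn n ω * (ξ : Ω → ℝ) ω)
        _ ≤ ∫ ω, |(ξ : Ω → ℝ) ω| ∂P := by
            refine integral_mono (hint_bdd (gn n) (hgn n).1 ((hgn n).2.1) ξ).abs
              (L1.integrable_coeFn ξ).abs fun ω => ?_
            rw [abs_mul]
            have h2 : |gn n ω| ≤ 1 := by
              rw [abs_of_nonneg ((hgn n).2.1 ω).1]; exact ((hgn n).2.1 ω).2
            nlinarith [abs_nonneg ((ξ : Ω → ℝ) ω), abs_nonneg (gn n ω)]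
    rw [heq]
    calc ∑' n : ℕ, ∫ ω, ((1:ℝ)/2)^(n+1) * gn n ω * (ξ : Ω → ℝ) ω ∂P
        ≤ ∑' _ : ℕ, (0:ℝ) := Summable.tsum_le_tsum hterm hsummable summable_zero
      _ = 0 := tsum_zero
  have hgstarG : gstar ∈ G :=
    ⟨hgstar_meas, fun ω => ⟨hgstar_nonneg ω, hgstar_le_one ω⟩, hgstarK⟩
  have hpos_iff : ∀ ω, 0 < gstar ω ↔ ∃ n, 0 < gn n ω := by
    intro ω
    constructor
    · intro h
      by_contra hc
      push_neg at hc
      have hz : ∀ n : ℕ, ((1:ℝ)/2)^(n+1) * gn n ω = 0 := fun n => by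
        rw [le_antisymm (hc n) ((hgn n).2.1 ω).1, mul_zero]
      rw [hgstar_def] at h
      simp only [hz, tsum_zero] at h
      exact lt_irrefl 0 h
    · rintro ⟨n, hn⟩
      have hle := Summable.le_tsum (hsum ω) n
        (fun m _ => mul_nonneg (by positivity) ((hgn m).2.1 ω).1)
      exact lt_of_lt_of_le (mul_pos (by positivity) hn) hle
  have hset_meas : ∀ (g : Ω → ℝ), Measurable g → MeasurableSet {ω | 0 < g ω} :=
    fun g hg => measurableSet_lt measurable_const hg
  have hsSup_eq : (P {ω | 0 < gstar ω}).toReal = sSup S := by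
    refine le_antisymm (le_csSup hS_bdd ⟨gstar, hgstarG, rfl⟩) ?_
    refine le_of_tendsto hu_tendsto (Filter.Eventually.of_forall fun n => ?_)
    refine le_of_eq_of_le (hgn_eq n).symm
      (ENNReal.toReal_mono (measure_ne_top _ _) (measure_mono fun ω hω => ?_))
    exact (hpos_iff ω).mpr ⟨n, hω⟩
  have hfull : P {ω | 0 < gstar ω}ᶜ = 0 := by
    by_contra hPA
    set A := {ω | 0 < gstar ω}ᶜ with hA_def
    have hA : MeasurableSet A := (hset_meas _ hgstar_meas).compl
    obtain ⟨h, hh_meas, hh_b, hhK, hhA⟩ :=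
      krepsYan_exists_g P K hclosed hconvex hcone hneg hpos A hA hPA
    have hposh : P (A ∩ {ω | 0 < h ω}) ≠ 0 := by
      intro h0
      have hres : ∀ᵐ ω ∂P.restrict A, h ω ≤ 0 := by
        rw [ae_restrict_iff' hA]
        filter_upwards [measure_eq_zero_iff_ae_notMem.mp h0] with ω hω hωA
        by_contra hlt
        exact hω ⟨hωA, not_le.mp hlt⟩
      have := integral_nonpos_of_ae hres
      linarith [hhA]
    set g' : Ω → ℝ := fun ω => (gstar ω + h ω)/2 with hg'_def
    have hg'G : g' ∈ G := by
      refine ⟨(hgstar_meas.add hh_meas).div_const _, fun ω => ?_, ?_⟩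
      · constructor
        · have := hgstar_nonneg ω; have := (hh_b ω).1; positivity
        · have := hgstar_le_one ω; have := (hh_b ω).2
          rw [div_le_one (by norm_num : (0:ℝ) < 2)]; linarith
      · intro ξ hξ
        have h1 := hint_bdd gstar hgstar_meas
          (fun ω => ⟨hgstar_nonneg ω, hgstar_le_one ω⟩) ξ
        have h2 := hint_bdd h hh_meas hh_b ξ
        have heq : ∫ ω, g' ω * (ξ : Ω → ℝ) ω ∂P
            = (∫ ω, gstar ω * (ξ : Ω → ℝ) ω ∂P + ∫ ω, h ω * (ξ : Ω → ℝ) ω ∂P)/2 := by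
          rw [← integral_add h1 h2, ← integral_div]
          exact integral_congr_ae (Filter.Eventually.of_forall fun ω => by
            dsimp only; ring)
        rw [heq]
        have := hgstarK ξ hξ; have := hhK ξ hξ; linarith
    have hsub : {ω | 0 < gstar ω} ∪ (A ∩ {ω | 0 < h ω}) ⊆ {ω | 0 < g' ω} := by
      rintro ω (hω | ⟨hωA, hωh⟩)
      · have := (hh_b ω).1
        show 0 < (gstar ω + h ω)/2
        have : (0:ℝ) < gstar ω := hω
        positivity
      · have h1 := hgstar_nonneg ω
        show 0 < (gstar ω + h ω)/2
        have h2 : (0:ℝ) < h ω := hωh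
        positivity
    have hdisj : Disjoint {ω | 0 < gstar ω} (A ∩ {ω | 0 < h ω}) :=
      Set.disjoint_left.mpr fun ω hω hω' => hω'.1 hω
    have hlt : sSup S < (P {ω | 0 < g' ω}).toReal := by
      calc sSup S = (P {ω | 0 < gstar ω}).toReal := hsSup_eq.symm
        _ < (P {ω | 0 < gstar ω}).toReal + (P (A ∩ {ω | 0 < h ω})).toReal := by
            have := ENNReal.toReal_pos hposh (measure_ne_top _ _)
            linarith
        _ = (P ({ω | 0 < gstar ω} ∪ (A ∩ {ω | 0 < h ω}))).toReal := by
            rw [measure_union hdisj (hA.inter (hset_meas _ hh_meas)),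
              ENNReal.toReal_add (measure_ne_top _ _) (measure_ne_top _ _)]
        _ ≤ (P {ω | 0 < g' ω}).toReal :=
            ENNReal.toReal_mono (measure_ne_top _ _) (measure_mono hsub)
    exact absurd (le_csSup hS_bdd ⟨g', hg'G, rfl⟩) (not_le.mpr hlt)
  have hae_pos : ∀ᵐ ω ∂P, 0 < gstar ω := by
    rw [ae_iff]
    rwa [Set.compl_setOf] at hfull
  have hgstar_int : Integrable gstar P := by
    refine Integrable.mono' (integrable_const 1) hgstar_meas.aestronglyMeasurable
      (Filter.Eventually.of_forall fun ω => ?_)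
    rw [Real.norm_eq_abs, abs_of_nonneg (hgstar_nonneg ω)]
    exact hgstar_le_one ω
  set c0 : ℝ := ∫ ω, gstar ω ∂P with hc0_def
  have hc0_pos : 0 < c0 := by
    rw [hc0_def, integral_pos_iff_support_of_nonneg hgstar_nonneg hgstar_int]
    have hsupp : {ω | 0 < gstar ω} ⊆ Function.support gstar := fun ω hω => ne_of_gt hω
    refine lt_of_lt_of_le ?_ (measure_mono hsupp)
    rw [pos_iff_ne_zero]
    intro hz
    have huniv : P Set.univ = 0 := by
      refine le_antisymm ?_ zero_le
      calc P Set.univ ≤ P ({ω | 0 < gstar ω} ∪ {ω | 0 < gstar ω}ᶜ) :=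
            measure_mono (by intro ω _; exact (em _).imp id id)
        _ ≤ P {ω | 0 < gstar ω} + P {ω | 0 < gstar ω}ᶜ := measure_union_le _ _
        _ = 0 := by rw [hz, hfull, add_zero]
    rw [measure_univ] at huniv
    exact one_ne_zero huniv
  set dens : Ω → ℝ≥0∞ := fun ω => ENNReal.ofReal (gstar ω / c0) with hdens_def
  have hdens_meas : Measurable dens :=
    ENNReal.measurable_ofReal.comp (hgstar_meas.div_const _)
  set Ptil := P.withDensity dens with hPtil_def
  have hint_div : Integrable (fun ω => gstar ω / c0) P := hgstar_int.div_const _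
  have hprob : IsProbabilityMeasure Ptil := by
    constructor
    rw [hPtil_def, withDensity_apply _ MeasurableSet.univ, Measure.restrict_univ]
    rw [← ofReal_integral_eq_lintegral_ofReal hint_div
      (Filter.Eventually.of_forall fun ω => div_nonneg (hgstar_nonneg ω) hc0_pos.le)]
    rw [integral_div, ← hc0_def, div_self (ne_of_gt hc0_pos)]
    exact ENNReal.ofReal_one
  have hP_ac : P ≪ Ptil := by
    refine Measure.AbsolutelyContinuous.mk fun s hs h0 => ?_
    rw [hPtil_def, withDensity_apply _ hs] at h0
    have hdens0 : ∀ᵐ ω ∂P.restrict s, dens ω = 0 :=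
      (lintegral_eq_zero_iff' hdens_meas.aemeasurable).mp h0
    have hpos' : ∀ᵐ ω ∂P.restrict s, 0 < gstar ω := ae_restrict_of_ae hae_pos
    have hfalse : ∀ᵐ ω ∂P.restrict s, False := by
      filter_upwards [hdens0, hpos'] with ω h1 h2
      rw [hdens_def] at h1
      simp only [ENNReal.ofReal_eq_zero] at h1
      have : 0 < gstar ω / c0 := div_pos h2 hc0_pos
      linarith
    have hz := ae_iff.mp hfalse
    rw [show {a : Ω | ¬False} = Set.univ from by simp, Measure.restrict_apply_univ] at hz
    exact hz
  have hrn : ∃ C : NNReal, ∀ᵐ ω ∂P, Ptil.rnDeriv P ω ≤ (C : ENNReal) := by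
    refine ⟨Real.toNNReal (1/c0), ?_⟩
    filter_upwards [Measure.rnDeriv_withDensity P hdens_meas] with ω hω
    rw [hPtil_def, hω, hdens_def]
    refine le_trans (ENNReal.ofReal_le_ofReal ?_) (le_of_eq rfl)
    gcongr
    <;> first
      | exact hc0_pos
      | exact hgstar_le_one ω
  refine ⟨Ptil, hprob, ⟨hP_ac, withDensity_absolutelyContinuous P dens⟩, hrn, ?_⟩
  intro ξ hξ
  have hmeasnn : Measurable (fun ω => (gstar ω / c0).toNNReal) :=
    measurable_real_toNNReal.comp (hgstar_meas.div_const _)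
  have hPtil_eq : Ptil = P.withDensity (fun ω => ((gstar ω / c0).toNNReal : ℝ≥0∞)) := rfl
  rw [hPtil_eq, integral_withDensity_eq_integral_smul hmeasnn]
  have heq : ∫ ω, (gstar ω / c0).toNNReal • (ξ : Ω → ℝ) ω ∂P
      = c0⁻¹ * ∫ ω, gstar ω * (ξ : Ω → ℝ) ω ∂P := by
    rw [← integral_const_mul]
    refine integral_congr_ae (Filter.Eventually.of_forall fun ω => ?_)
    dsimp only
    rw [NNReal.smul_def, Real.coe_toNNReal _ (div_nonneg (hgstar_nonneg ω) hc0_pos.le),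
      smul_eq_mul]
    ring
  rw [heq]
  exact mul_nonpos_of_nonneg_of_nonpos (inv_nonneg.mpr hc0_pos.le) (hgstarK ξ hξ)

end KrepsYanAux

open MeasureTheory in
/-- (Kreps–Yan) Let `K ⊇ -L¹₊` be a closed convex cone in `L¹(Ω, 𝓕, P)`
with `K ∩ L¹₊ = {0}`. Then there is a probability measure `P̃ ∼ P` with `dP̃/dP ∈ L^∞`
such that `E_{P̃}[ξ] ≤ 0` for all `ξ ∈ K`. -/
theorem stmt16 {Ω : Type*} [MeasurableSpace Ω]
    (P : Measure Ω) [IsProbabilityMeasure P]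
    (K : Set (Lp ℝ 1 P))
    (hclosed : IsClosed K) (hconvex : Convex ℝ K)
    (hcone : ∀ ξ ∈ K, ∀ c : ℝ, 0 ≤ c → c • ξ ∈ K)
    (hneg : ∀ ξ : Lp ℝ 1 P, (∀ᵐ ω ∂P, (ξ : Ω → ℝ) ω ≤ 0) → ξ ∈ K)
    (hpos : ∀ ξ ∈ K, (∀ᵐ ω ∂P, 0 ≤ (ξ : Ω → ℝ) ω) → ξ = 0) :
    ∃ Ptil : Measure Ω, IsProbabilityMeasure Ptil ∧ (P ≪ Ptil ∧ Ptil ≪ P) ∧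
      (∃ C : NNReal, ∀ᵐ ω ∂P, Ptil.rnDeriv P ω ≤ (C : ENNReal)) ∧
      ∀ ξ ∈ K, ∫ ω, (ξ : Ω → ℝ) ω ∂Ptil ≤ 0 :=
  stmt16' P K hclosed hconvex hcone hneg hpos
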